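/- Let t be an ω-term over a finite alphabet A and let u, v be elements of the free profinite aperiodic monoid Ω_A A. Then t represents the product uv if and only if there exists a decomposition (t_1, t_2) of t such that t_1 represents u and t_2 represents v. -/

import Mathlib

/-- ω-terms over the alphabet `A`: built from `1` and letters using binary
multiplication and the unary ω-power. -/
inductive OmegaTerm (A : Type*) : Type _ where
  | one : OmegaTerm A
  | letter : A → OmegaTerm A
  | mul : OmegaTerm A → OmegaTerm A → OmegaTerm A
  | omega : OmegaTerm A → OmegaTerm A

namespace OmegaTerm

variable {A : Type*}

/-- The ω-term `s^k` for `k ≥ 1` (`s^{k+1} = s^k · s`); `pow s 0` is the term `1`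
but is never used with exponent `0` below. -/
def pow (s : OmegaTerm A) : ℕ → OmegaTerm A
  | 0 => OmegaTerm.one
  | 1 => s
  | k + 2 => (pow s (k + 1)).mul s

/-- The ω-term `s^k · t`, where `k ∈ ℕ ∪ {ω}` (`none` denotes the exponent ω), with the
conventions `s^0 · t = t` and `s^ω · t = (s^ω) · t`. -/
def powMul (s : OmegaTerm A) : Option ℕ → OmegaTerm A → OmegaTerm A
  | none, t => (OmegaTerm.omega s).mul t
  | some 0, t => t
  | some (k + 1), t => (pow s (k + 1)).mul t

/-- The ω-term `t · s^k`, where `k ∈ ℕ ∪ {ω}`, with `t · s^0 = t`. -/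
def mulPow (t s : OmegaTerm A) : Option ℕ → OmegaTerm A
  | none => t.mul (OmegaTerm.omega s)
  | some 0 => t
  | some (k + 1) => t.mul (pow s (k + 1))

/-- Decompositions of ω-terms: if `t` is `1` or a letter, its decompositions are `(1,t)`
and `(t,1)`; if `t = t₁ · t₂`, they are `(s₁, s₂ · t₂)` for `(s₁,s₂)` a decomposition of
`t₁` and `(t₁ · s₁, s₂)` for `(s₁,s₂)` a decomposition of `t₂`; if `t = s^ω`, they are
`(s^k · s₁, s₂ · s^ℓ)` with `(s₁,s₂)` a decomposition of `s` and `k, ℓ ∈ ℕ ∪ {ω}`, at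
least one of them equal to ω. -/
inductive Decomp : OmegaTerm A → OmegaTerm A → OmegaTerm A → Prop where
  | base_left (t : OmegaTerm A) (h : t = OmegaTerm.one ∨ ∃ a, t = OmegaTerm.letter a) :
      Decomp t OmegaTerm.one t
  | base_right (t : OmegaTerm A) (h : t = OmegaTerm.one ∨ ∃ a, t = OmegaTerm.letter a) :
      Decomp t t OmegaTerm.one
  | mul_left {t₁ t₂ s₁ s₂ : OmegaTerm A} :
      Decomp t₁ s₁ s₂ → Decomp (t₁.mul t₂) s₁ (s₂.mul t₂)
  | mul_right {t₁ t₂ s₁ s₂ : OmegaTerm A} :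
      Decomp t₂ s₁ s₂ → Decomp (t₁.mul t₂) (t₁.mul s₁) s₂
  | omega_case {s s₁ s₂ : OmegaTerm A} (k ℓ : Option ℕ) (h : k = none ∨ ℓ = none) :
      Decomp s s₁ s₂ →
      Decomp (OmegaTerm.omega s) (powMul s k s₁) (mulPow s₂ s ℓ)

/-- Interpretation of ω-terms in a monoid `M` equipped with a unary ω-power operation
`w : M → M`, the letters being interpreted via `f : A → M`. -/
def eval {M : Type*} [Monoid M] (f : A → M) (w : M → M) : OmegaTerm A → M
  | OmegaTerm.one => 1
  | OmegaTerm.letter a => f a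
  | OmegaTerm.mul t₁ t₂ => eval f w t₁ * eval f w t₂
  | OmegaTerm.omega t => w (eval f w t)

end OmegaTerm

open Filter

section AuxHelpers

variable {M : Type*} [Monoid M] [TopologicalSpace M] [T2Space M]

omit [T2Space M] in
lemma aux_tendsto_pow (w : M → M)
    (hlim : ∀ m : M, Tendsto (fun n : ℕ => m ^ (n + 1)) atTop (nhds (w m))) (m : M) :
    Tendsto (fun n : ℕ => m ^ n) atTop (nhds (w m)) :=
  (tendsto_add_atTop_iff_nat 1).1 (hlim m)

lemma aux_w_mul (hcont : Continuous fun p : M × M => p.1 * p.2) (w : M → M)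
    (hlim : ∀ m : M, Tendsto (fun n : ℕ => m ^ (n + 1)) atTop (nhds (w m))) (m : M) :
    w m * m = w m := by
  have h1 : Tendsto (fun n : ℕ => m ^ (n + 1) * m) atTop (nhds (w m * m)) :=
    (hcont.tendsto (w m, m)).comp ((hlim m).prodMk_nhds tendsto_const_nhds)
  have h2 : Tendsto (fun n : ℕ => m ^ (n + 1) * m) atTop (nhds (w m)) :=
    Filter.Tendsto.congr (fun n => pow_succ m (n + 1))
      ((hlim m).comp (tendsto_add_atTop_nat 1))
  exact tendsto_nhds_unique h1 h2

lemma aux_mul_w (hcont : Continuous fun p : M × M => p.1 * p.2) (w : M → M)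
    (hlim : ∀ m : M, Tendsto (fun n : ℕ => m ^ (n + 1)) atTop (nhds (w m))) (m : M) :
    m * w m = w m := by
  have h1 : Tendsto (fun n : ℕ => m * m ^ (n + 1)) atTop (nhds (m * w m)) :=
    (hcont.tendsto (m, w m)).comp (tendsto_const_nhds.prodMk_nhds (hlim m))
  have h2 : Tendsto (fun n : ℕ => m * m ^ (n + 1)) atTop (nhds (w m)) :=
    Filter.Tendsto.congr (fun n => pow_succ' m (n + 1))
      ((hlim m).comp (tendsto_add_atTop_nat 1))
  exact tendsto_nhds_unique h1 h2

lemma aux_w_mul_pow (hcont : Continuous fun p : M × M => p.1 * p.2) (w : M → M)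
    (hlim : ∀ m : M, Tendsto (fun n : ℕ => m ^ (n + 1)) atTop (nhds (w m))) (m : M)
    (j : ℕ) : w m * m ^ j = w m := by
  induction j with
  | zero => simp
  | succ j ih => rw [pow_succ, ← mul_assoc, ih, aux_w_mul hcont w hlim]

lemma aux_pow_mul_w (hcont : Continuous fun p : M × M => p.1 * p.2) (w : M → M)
    (hlim : ∀ m : M, Tendsto (fun n : ℕ => m ^ (n + 1)) atTop (nhds (w m))) (m : M)
    (j : ℕ) : m ^ j * w m = w m := by
  induction j with
  | zero => simp
  | succ j ih => rw [pow_succ', mul_assoc, ih, aux_mul_w hcont w hlim]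

end AuxHelpers

/-- Factorizations of powers via equidivisibility. -/
lemma aux_powfact {M : Type*} [Monoid M]
    (hequi : ∀ s t u v : M, s * t = u * v →
      ∃ z : M, (s = u * z ∧ z * t = v) ∨ (s * z = u ∧ t = z * v))
    (m : M) : ∀ (n : ℕ) (u v : M), u * v = m ^ (n + 1) →
      ∃ (j k : ℕ) (p q : M), p * q = m ∧ u = m ^ j * p ∧ v = q * m ^ k ∧ j + k = n := by
  intro n
  induction n with
  | zero =>
    intro u v h
    exact ⟨0, 0, u, v, by simpa using h, by simp, by simp, rfl⟩
  | succ n ih =>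
    intro u v h
    have h' : u * v = m * m ^ (n + 1) := by rw [h]; exact pow_succ' m (n + 1)
    obtain ⟨z, hz | hz⟩ := hequi u v m (m ^ (n + 1)) h'
    · obtain ⟨j, k, p, q, hpq, hz1, hv, hjk⟩ := ih z v hz.2
      exact ⟨j + 1, k, p, q, hpq, by rw [hz.1, hz1, pow_succ', mul_assoc], hv, by omega⟩
    · exact ⟨0, n + 1, u, z, hz.1, by simp, hz.2, by omega⟩

namespace OmegaTerm

variable {A : Type*} {M : Type*} [Monoid M]

lemma aux_eval_pow (f : A → M) (w : M → M) (s : OmegaTerm A) :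
    ∀ k : ℕ, eval f w (OmegaTerm.pow s (k + 1)) = (eval f w s) ^ (k + 1) := by
  intro k
  induction k with
  | zero => simp [OmegaTerm.pow, eval]
  | succ k ih => rw [show k + 1 + 1 = k + 2 from rfl, OmegaTerm.pow, eval, ih, ← pow_succ]

lemma aux_eval_powMul_none (f : A → M) (w : M → M) (s s₁ : OmegaTerm A) :
    eval f w (powMul s none s₁) = w (eval f w s) * eval f w s₁ := rfl

lemma aux_eval_powMul_some (f : A → M) (w : M → M) (s s₁ : OmegaTerm A) (j : ℕ) :
    eval f w (powMul s (some j) s₁) = (eval f w s) ^ j * eval f w s₁ := by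
  cases j with
  | zero => simp [powMul]
  | succ j => rw [powMul, eval, aux_eval_pow]

lemma aux_eval_mulPow_none (f : A → M) (w : M → M) (s s₂ : OmegaTerm A) :
    eval f w (mulPow s₂ s none) = eval f w s₂ * w (eval f w s) := rfl

lemma aux_eval_mulPow_some (f : A → M) (w : M → M) (s s₂ : OmegaTerm A) (j : ℕ) :
    eval f w (mulPow s₂ s (some j)) = eval f w s₂ * (eval f w s) ^ j := by
  cases j with
  | zero => simp [mulPow]
  | succ j => rw [mulPow, eval, aux_eval_pow]

end OmegaTerm

/-- Auxiliary structure recording a factorization of `a * b = m ^ (n+1)` into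
`a = m^j * p`, `b = q * m^k` with `p * q = m` and `j + k = n`. -/
structure AuxPowFact {M : Type*} [Monoid M] (m : M) : Type _ where
  n : ℕ
  a : M
  b : M
  j : ℕ
  k : ℕ
  p : M
  q : M
  hab : a * b = m ^ (n + 1)
  hpq : p * q = m
  ha : a = m ^ j * p
  hb : b = q * m ^ k
  hjk : j + k = n

/-- The easy direction: a decomposition of `t` multiplies out to `t`. -/
lemma aux_decomp_eval {A M : Type*} [Monoid M] [TopologicalSpace M] [T2Space M]
    (hcont : Continuous fun p : M × M => p.1 * p.2)
    (f : A → M) (w : M → M)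
    (hidem : ∀ m : M, w m * w m = w m)
    (hlim : ∀ m : M, Tendsto (fun n : ℕ => m ^ (n + 1)) atTop (nhds (w m)))
    {t t₁ t₂ : OmegaTerm A} (hd : OmegaTerm.Decomp t t₁ t₂) :
    OmegaTerm.eval f w t₁ * OmegaTerm.eval f w t₂ = OmegaTerm.eval f w t := by
  induction hd with
  | base_left t h => simp [OmegaTerm.eval]
  | base_right t h => simp [OmegaTerm.eval]
  | mul_left hd ih =>
    simp only [OmegaTerm.eval]
    rw [← mul_assoc, ih]
  | mul_right hd ih =>
    simp only [OmegaTerm.eval]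
    rw [mul_assoc, ih]
  | @omega_case s s₁ s₂ k l h hd ih =>
    show _ = w (OmegaTerm.eval f w s)
    cases k with
    | none =>
      rw [OmegaTerm.aux_eval_powMul_none]
      cases l with
      | none =>
        rw [OmegaTerm.aux_eval_mulPow_none, mul_assoc, ← mul_assoc (OmegaTerm.eval f w s₁),
          ih, aux_mul_w hcont w hlim, hidem]
      | some b =>
        rw [OmegaTerm.aux_eval_mulPow_some, mul_assoc, ← mul_assoc (OmegaTerm.eval f w s₁),
          ih, ← pow_succ', aux_w_mul_pow hcont w hlim]
    | some a =>
      cases l with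
      | none =>
        rw [OmegaTerm.aux_eval_powMul_some, OmegaTerm.aux_eval_mulPow_none, mul_assoc,
          ← mul_assoc (OmegaTerm.eval f w s₁), ih, aux_mul_w hcont w hlim,
          aux_pow_mul_w hcont w hlim]
      | some b =>
        rcases h with h | h <;> simp at h

/-- The hard direction: any factorization of `eval t` comes from a decomposition. -/
lemma aux_forward {A M : Type*} [Monoid M] [TopologicalSpace M]
    [CompactSpace M] [T2Space M]
    (hcont : Continuous fun p : M × M => p.1 * p.2)
    (hopen : IsOpenMap fun p : M × M => p.1 * p.2)
    (hequi : ∀ s t u v : M, s * t = u * v →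
      ∃ z : M, (s = u * z ∧ z * t = v) ∨ (s * z = u ∧ t = z * v))
    (f : A → M) (w : M → M)
    (hlim : ∀ m : M, Tendsto (fun n : ℕ => m ^ (n + 1)) atTop (nhds (w m)))
    (hone : ∀ u v : M, u * v = 1 → u = 1 ∧ v = 1)
    (hletter : ∀ (a : A) (u v : M), u * v = f a → (u = 1 ∧ v = f a) ∨ (u = f a ∧ v = 1)) :
    ∀ (t : OmegaTerm A) (u v : M), OmegaTerm.eval f w t = u * v →
      ∃ t₁ t₂ : OmegaTerm A, OmegaTerm.Decomp t t₁ t₂ ∧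
        OmegaTerm.eval f w t₁ = u ∧ OmegaTerm.eval f w t₂ = v := by
  intro t
  induction t with
  | one =>
    intro u v h
    obtain ⟨hu, hv⟩ := hone u v h.symm
    exact ⟨.one, .one, .base_left _ (Or.inl rfl), by simp [OmegaTerm.eval, hu],
      by simp [OmegaTerm.eval, hv]⟩
  | letter a =>
    intro u v h
    rcases hletter a u v h.symm with ⟨hu, hv⟩ | ⟨hu, hv⟩
    · exact ⟨.one, .letter a, .base_left _ (Or.inr ⟨a, rfl⟩),
        by simp [OmegaTerm.eval, hu], by simp [OmegaTerm.eval, hv]⟩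
    · exact ⟨.letter a, .one, .base_right _ (Or.inr ⟨a, rfl⟩),
        by simp [OmegaTerm.eval, hu], by simp [OmegaTerm.eval, hv]⟩
  | mul t₁ t₂ ih₁ ih₂ =>
    intro u v h
    obtain ⟨z, hz | hz⟩ := hequi (OmegaTerm.eval f w t₁) (OmegaTerm.eval f w t₂) u v h
    · obtain ⟨r₁, r₂, hd, h1, h2⟩ := ih₁ u z hz.1
      exact ⟨r₁, r₂.mul t₂, .mul_left hd, h1, by
        show OmegaTerm.eval f w r₂ * OmegaTerm.eval f w t₂ = v
        rw [h2, hz.2]⟩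
    · obtain ⟨r₁, r₂, hd, h1, h2⟩ := ih₂ z v hz.2
      exact ⟨t₁.mul r₁, r₂, .mul_right hd, by
        show OmegaTerm.eval f w t₁ * OmegaTerm.eval f w r₁ = u
        rw [h1, hz.1], h2⟩
  | omega s ih =>
    intro u v huv
    set m := OmegaTerm.eval f w s with hm
    have hwm : w m = u * v := huv
    -- the filter of factorizations approximating (u, v)
    have hFne : Filter.NeBot (comap (fun d : AuxPowFact m => (d.a, d.b, d.n))
        ((nhds u) ×ˢ ((nhds v) ×ˢ atTop))) := by
      refine Filter.comap_neBot fun t ht => ?_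
      rw [Filter.mem_prod_iff] at ht
      obtain ⟨U, hU, W, hW, hUW⟩ := ht
      rw [Filter.mem_prod_iff] at hW
      obtain ⟨V, hV, S, hS, hVS⟩ := hW
      obtain ⟨N, hN⟩ := Filter.mem_atTop_sets.1 hS
      obtain ⟨U', hU'U, hU'o, huU'⟩ := mem_nhds_iff.1 hU
      obtain ⟨V', hV'V, hV'o, hvV'⟩ := mem_nhds_iff.1 hV
      have hopen2 : IsOpen ((fun p : M × M => p.1 * p.2) '' (U' ×ˢ V')) :=
        hopen _ (hU'o.prod hV'o)
      have hmemw : w m ∈ (fun p : M × M => p.1 * p.2) '' (U' ×ˢ V') := by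
        rw [hwm]; exact ⟨(u, v), ⟨huU', hvV'⟩, rfl⟩
      have hev : ∀ᶠ n : ℕ in atTop,
          m ^ (n + 1) ∈ (fun p : M × M => p.1 * p.2) '' (U' ×ˢ V') :=
        (hlim m).eventually (hopen2.mem_nhds hmemw)
      obtain ⟨n, hn1, hn2⟩ := (hev.and (eventually_ge_atTop N)).exists
      obtain ⟨⟨a, b⟩, ⟨haU', hbV'⟩, hab⟩ := hn1
      obtain ⟨j, k, p, q, hpq, hap, hbq, hjk⟩ := aux_powfact hequi m n a b hab
      refine ⟨⟨n, a, b, j, k, p, q, hab, hpq, hap, hbq, hjk⟩, ?_⟩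
      exact hUW ⟨hU'U haU', hVS ⟨hV'V hbV', hN n hn2⟩⟩
    set 𝒰 : Ultrafilter (AuxPowFact m) :=
      @Ultrafilter.of _ _ hFne with h𝒰
    have h𝒰F : (𝒰 : Filter (AuxPowFact m)) ≤ comap (fun d : AuxPowFact m => (d.a, d.b, d.n))
        ((nhds u) ×ˢ ((nhds v) ×ˢ atTop)) := Ultrafilter.of_le _
    have htg : Tendsto (fun d : AuxPowFact m => (d.a, d.b, d.n)) 𝒰
        ((nhds u) ×ˢ ((nhds v) ×ˢ atTop)) := tendsto_comap.mono_left h𝒰F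
    have hta : Tendsto (fun d : AuxPowFact m => d.a) 𝒰 (nhds u) := tendsto_fst.comp htg
    have htb : Tendsto (fun d : AuxPowFact m => d.b) 𝒰 (nhds v) :=
      tendsto_fst.comp (tendsto_snd.comp htg)
    have htn : Tendsto (fun d : AuxPowFact m => d.n) 𝒰 atTop :=
      tendsto_snd.comp (tendsto_snd.comp htg)
    obtain ⟨pL, -, hp⟩ := isCompact_univ.ultrafilter_le_nhds
      (𝒰.map fun d : AuxPowFact m => d.p) (le_principal_iff.2 univ_mem)
    obtain ⟨qL, -, hq⟩ := isCompact_univ.ultrafilter_le_nhds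
      (𝒰.map fun d : AuxPowFact m => d.q) (le_principal_iff.2 univ_mem)
    rw [Ultrafilter.coe_map] at hp hq
    have hpt : Tendsto (fun d : AuxPowFact m => d.p) 𝒰 (nhds pL) := hp
    have hqt : Tendsto (fun d : AuxPowFact m => d.q) 𝒰 (nhds qL) := hq
    have hpqL : pL * qL = m :=
      tendsto_nhds_unique ((hcont.tendsto (pL, qL)).comp (hpt.prodMk_nhds hqt))
        (tendsto_const_nhds.congr fun d => d.hpq.symm)
    -- limits of the power sequences
    have hx : ∃ x : M, Tendsto (fun d : AuxPowFact m => m ^ d.j) 𝒰 (nhds x) ∧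
        (x = w m ∨ ∃ j₀ : ℕ, x = m ^ j₀ ∧ {d : AuxPowFact m | d.j = j₀} ∈ 𝒰) := by
      by_cases hbig : ∀ N : ℕ, {d : AuxPowFact m | N ≤ d.j} ∈ 𝒰
      · refine ⟨w m, ?_, Or.inl rfl⟩
        have hj : Tendsto (fun d : AuxPowFact m => d.j) 𝒰 atTop :=
          tendsto_atTop.2 fun N => hbig N
        exact (aux_tendsto_pow w hlim m).comp hj
      · push_neg at hbig
        obtain ⟨N, hN⟩ := hbig
        have h1 : {d : AuxPowFact m | d.j < N} ∈ 𝒰 := by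
          have := (Ultrafilter.compl_mem_iff_notMem).2 hN
          simpa [Set.compl_setOf, not_le] using this
        have h2 : Set.Iio N ∈ 𝒰.map (fun d : AuxPowFact m => d.j) :=
          Ultrafilter.mem_map.2 h1
        obtain ⟨j₀, hj₀N, hpure⟩ := Ultrafilter.eq_pure_of_finite_mem (Set.finite_Iio N) h2
        have hmem : {d : AuxPowFact m | d.j = j₀} ∈ 𝒰 := by
          have hs : {j₀} ∈ 𝒰.map (fun d : AuxPowFact m => d.j) := by
            rw [hpure]; simp
          exact Ultrafilter.mem_map.1 hs
        refine ⟨m ^ j₀, ?_, Or.inr ⟨j₀, rfl, hmem⟩⟩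
        have hee : (fun _ : AuxPowFact m => m ^ j₀) =ᶠ[(𝒰 : Filter (AuxPowFact m))]
            fun d : AuxPowFact m => m ^ d.j := by
          filter_upwards [hmem] with d hd
          rw [hd]
        exact Tendsto.congr' hee tendsto_const_nhds
    have hy : ∃ y : M, Tendsto (fun d : AuxPowFact m => m ^ d.k) 𝒰 (nhds y) ∧
        (y = w m ∨ ∃ k₀ : ℕ, y = m ^ k₀ ∧ {d : AuxPowFact m | d.k = k₀} ∈ 𝒰) := by
      by_cases hbig : ∀ N : ℕ, {d : AuxPowFact m | N ≤ d.k} ∈ 𝒰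
      · refine ⟨w m, ?_, Or.inl rfl⟩
        have hk : Tendsto (fun d : AuxPowFact m => d.k) 𝒰 atTop :=
          tendsto_atTop.2 fun N => hbig N
        exact (aux_tendsto_pow w hlim m).comp hk
      · push_neg at hbig
        obtain ⟨N, hN⟩ := hbig
        have h1 : {d : AuxPowFact m | d.k < N} ∈ 𝒰 := by
          have := (Ultrafilter.compl_mem_iff_notMem).2 hN
          simpa [Set.compl_setOf, not_le] using this
        have h2 : Set.Iio N ∈ 𝒰.map (fun d : AuxPowFact m => d.k) :=
          Ultrafilter.mem_map.2 h1
        obtain ⟨k₀, hk₀N, hpure⟩ := Ultrafilter.eq_pure_of_finite_mem (Set.finite_Iio N) h2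
        have hmem : {d : AuxPowFact m | d.k = k₀} ∈ 𝒰 := by
          have hs : {k₀} ∈ 𝒰.map (fun d : AuxPowFact m => d.k) := by
            rw [hpure]; simp
          exact Ultrafilter.mem_map.1 hs
        refine ⟨m ^ k₀, ?_, Or.inr ⟨k₀, rfl, hmem⟩⟩
        have hee : (fun _ : AuxPowFact m => m ^ k₀) =ᶠ[(𝒰 : Filter (AuxPowFact m))]
            fun d : AuxPowFact m => m ^ d.k := by
          filter_upwards [hmem] with d hd
          rw [hd]
        exact Tendsto.congr' hee tendsto_const_nhds
    obtain ⟨x, hxt, hxc⟩ := hx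
    obtain ⟨y, hyt, hyc⟩ := hy
    have hux : u = x * pL :=
      tendsto_nhds_unique hta
        (((hcont.tendsto (x, pL)).comp (hxt.prodMk_nhds hpt)).congr fun d => d.ha.symm)
    have hvy : v = qL * y :=
      tendsto_nhds_unique htb
        (((hcont.tendsto (qL, y)).comp (hqt.prodMk_nhds hyt)).congr fun d => d.hb.symm)
    obtain ⟨s₁, s₂, hd, hs1, hs2⟩ := ih pL qL hpqL.symm
    rcases hxc with hxw | ⟨j₀, hxp, hjmem⟩
    · rcases hyc with hyw | ⟨k₀, hyp, hkmem⟩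
      · refine ⟨OmegaTerm.powMul s none s₁, OmegaTerm.mulPow s₂ s none,
          .omega_case none none (Or.inl rfl) hd, ?_, ?_⟩
        · rw [OmegaTerm.aux_eval_powMul_none, hs1, ← hm, ← hxw]; exact hux.symm
        · rw [OmegaTerm.aux_eval_mulPow_none, hs2, ← hm, ← hyw]; exact hvy.symm
      · refine ⟨OmegaTerm.powMul s none s₁, OmegaTerm.mulPow s₂ s (some k₀),
          .omega_case none (some k₀) (Or.inl rfl) hd, ?_, ?_⟩
        · rw [OmegaTerm.aux_eval_powMul_none, hs1, ← hm, ← hxw]; exact hux.symm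
        · rw [OmegaTerm.aux_eval_mulPow_some, hs2, ← hm, ← hyp]; exact hvy.symm
    · rcases hyc with hyw | ⟨k₀, hyp, hkmem⟩
      · refine ⟨OmegaTerm.powMul s (some j₀) s₁, OmegaTerm.mulPow s₂ s none,
          .omega_case (some j₀) none (Or.inr rfl) hd, ?_, ?_⟩
        · rw [OmegaTerm.aux_eval_powMul_some, hs1, ← hm, ← hxp]; exact hux.symm
        · rw [OmegaTerm.aux_eval_mulPow_none, hs2, ← hm, ← hyw]; exact hvy.symm
      · exfalso
        have hnn : {d : AuxPowFact m | j₀ + k₀ + 1 ≤ d.n} ∈ 𝒰 :=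
          htn.eventually_ge_atTop (j₀ + k₀ + 1)
        obtain ⟨d, hd1, hd2, hd3⟩ :=
          Filter.nonempty_of_mem (inter_mem hjmem (inter_mem hkmem hnn) :
            _ ∈ (𝒰 : Filter (AuxPowFact m)))
        have := d.hjk
        have h3 : j₀ + k₀ + 1 ≤ d.n := hd3
        rw [hd1, hd2] at this
        omega


/-- Let `M` be the free profinite aperiodic monoid over the finite alphabet `A`
(axiomatized here by: compact Hausdorff topological monoid, open multiplication,
equidivisibility, ω-power `w m` = the unique idempotent in the closed subsemigroup
generated by `m` = the limit of the powers of `m`, and `1` and letters having only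
trivial factorizations).  An ω-term `t` represents the product `u * v` if and only if
there is a decomposition `(t₁, t₂)` of `t` such that `t₁` represents `u` and `t₂`
represents `v`. -/
theorem represents_mul_iff_decomp
    {A M : Type*} [Fintype A] [Monoid M] [TopologicalSpace M]
    [CompactSpace M] [T2Space M]
    (hcont : Continuous fun p : M × M => p.1 * p.2)
    (hopen : IsOpenMap fun p : M × M => p.1 * p.2)
    (hequi : ∀ s t u v : M, s * t = u * v →
      ∃ z : M, (s = u * z ∧ z * t = v) ∨ (s * z = u ∧ t = z * v))
    (f : A → M) (w : M → M)
    (hidem : ∀ m : M, w m * w m = w m)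
    (hlim : ∀ m : M, Tendsto (fun n : ℕ => m ^ (n + 1)) atTop (nhds (w m)))
    (huniq : ∀ m e : M, e * e = e → e ∈ closure {x : M | ∃ n : ℕ, x = m ^ (n + 1)} →
      e = w m)
    (hone : ∀ u v : M, u * v = 1 → u = 1 ∧ v = 1)
    (hletter : ∀ (a : A) (u v : M), u * v = f a → (u = 1 ∧ v = f a) ∨ (u = f a ∧ v = 1))
    (t : OmegaTerm A) (u v : M) :
    OmegaTerm.eval f w t = u * v ↔
      ∃ t₁ t₂ : OmegaTerm A, OmegaTerm.Decomp t t₁ t₂ ∧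
        OmegaTerm.eval f w t₁ = u ∧ OmegaTerm.eval f w t₂ = v := by
  constructor
  · intro h
    exact aux_forward hcont hopen hequi f w hlim hone hletter t u v h
  · rintro ⟨t₁, t₂, hd, h1, h2⟩
    rw [← aux_decomp_eval hcont f w hidem hlim hd, h1, h2]
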